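/- Let L(x,y) ⊆ Σ* for x, y in a finite set S denote the homs of a category enriched in the quantale of languages P(Σ*) (composition is concatenation of languages, identities contain the empty word ε). Fix two objects x, y ∈ S and form the quotient enriched category X' identifying x and y. Then for objects z, w, the hom of the quotient is X'(z,w) = X(z,w) ∪ (X(z,x) ∪ X(z,y)) · (X(x,x) ∪ X(x,y) ∪ X(y,x) ∪ X(y,y))* · (X(x,w) ∪ X(y,w)), where · is language concatenation and * is Kleene star. -/
import Mathlib


open Computability

/- Convention: for languages, `L * M = {l ++ m : l ∈ L, m ∈ M}` (Mathlib's product);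
enriched composition is written in path order, so a `P(Σ*)`-category on a set `S` has
`{ε} ⊆ X z z` and `X z w * X w v ⊆ X z v`. -/

private lemma lang_sup_eq_add {σ : Type*} (a b : Language σ) : a ⊔ b = a + b := rfl

/-- The quotient of a `P(Σ*)`-enriched category identifying two objects `x` and `y`:
the family `X'(z,w) = X(z,w) ∪ (X(z,x) ∪ X(z,y)) · H* · (X(x,w) ∪ X(y,w))`, where
`H = X(x,x) ∪ X(x,y) ∪ X(y,x) ∪ X(y,y)`, is itself an enriched category in which `x`
and `y` are identified (it contains the identities of the merged object), it contains
`X`, and it is the least such family: any enriched category `Y` containing `X` in which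
`x` and `y` are identified contains `X'`. Hence `X'` is the quotient's hom family. -/
theorem kleene_quotient_formula {σ : Type*} {S : Type*} (X : S → S → Language σ)
    (Xid : ∀ z, 1 ≤ X z z) (Xcomp : ∀ z w v, X z w * X w v ≤ X z v) (x y : S) :
    let H : Language σ := X x x ⊔ X x y ⊔ X y x ⊔ X y y
    let X' : S → S → Language σ := fun z w =>
      X z w ⊔ (X z x ⊔ X z y) * H∗ * (X x w ⊔ X y w)
    -- `X'` is an enriched category …
    (∀ z, 1 ≤ X' z z) ∧ (∀ z w v, X' z w * X' w v ≤ X' z v) ∧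
    -- … in which `x` and `y` are identified …
    (1 ≤ X' x y ∧ 1 ≤ X' y x) ∧
    -- … containing `X` …
    (∀ z w, X z w ≤ X' z w) ∧
    -- … and it is the least such, hence the hom family of the quotient.
    (∀ Y : S → S → Language σ, (∀ z, 1 ≤ Y z z) → (∀ z w v, Y z w * Y w v ≤ Y z v) →
      (∀ z w, X z w ≤ Y z w) → 1 ≤ Y x y → 1 ≤ Y y x → ∀ z w, X' z w ≤ Y z w) := by
  intro H X'
  have hHxx : X x x ≤ H := le_sup_of_le_left (le_sup_of_le_left le_sup_left)
  have hHxy : X x y ≤ H := le_sup_of_le_left (le_sup_of_le_left le_sup_right)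
  have hHyx : X y x ≤ H := le_sup_of_le_left le_sup_right
  have hHyy : X y y ≤ H := le_sup_right
  -- a general composition bound for the "long" parts
  have hmid : ∀ w, (X x w ⊔ X y w) * (X w x ⊔ X w y) ≤ H := by
    intro w
    rw [lang_sup_eq_add, lang_sup_eq_add, add_mul, mul_add, mul_add]
    exact add_le (add_le ((Xcomp x w x).trans hHxx) ((Xcomp x w y).trans hHxy))
      (add_le ((Xcomp y w x).trans hHyx) ((Xcomp y w y).trans hHyy))
  have hleft : ∀ z w, X z w * (X w x ⊔ X w y) ≤ X z x ⊔ X z y := by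
    intro z w
    rw [lang_sup_eq_add, lang_sup_eq_add, mul_add]
    exact add_le (le_sup_of_le_left (Xcomp z w x)) (le_sup_of_le_right (Xcomp z w y))
  have hright : ∀ w v, (X x w ⊔ X y w) * X w v ≤ X x v ⊔ X y v := by
    intro w v
    rw [lang_sup_eq_add, lang_sup_eq_add, add_mul]
    exact add_le (le_sup_of_le_left (Xcomp x w v)) (le_sup_of_le_right (Xcomp y w v))
  have hcomp : ∀ z w v, X' z w * X' w v ≤ X' z v := by
    intro z w v
    show (X z w ⊔ (X z x ⊔ X z y) * H∗ * (X x w ⊔ X y w)) *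
        (X w v ⊔ (X w x ⊔ X w y) * H∗ * (X x v ⊔ X y v)) ≤
        X z v ⊔ (X z x ⊔ X z y) * H∗ * (X x v ⊔ X y v)
    rw [lang_sup_eq_add (X z w), lang_sup_eq_add (X w v), add_mul, mul_add, mul_add]
    refine add_le (add_le ?_ ?_) (add_le ?_ ?_)
    · exact le_sup_of_le_left (Xcomp z w v)
    · -- X z w * ((X w x ⊔ X w y) * H∗ * (X x v ⊔ X y v))
      refine le_sup_of_le_right ?_
      calc X z w * ((X w x ⊔ X w y) * H∗ * (X x v ⊔ X y v))
          = (X z w * (X w x ⊔ X w y)) * H∗ * (X x v ⊔ X y v) := by simp only [mul_assoc]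
        _ ≤ (X z x ⊔ X z y) * H∗ * (X x v ⊔ X y v) :=
            mul_le_mul' (mul_le_mul' (hleft z w) le_rfl) le_rfl
    · -- (X z x ⊔ X z y) * H∗ * (X x w ⊔ X y w) * X w v
      refine le_sup_of_le_right ?_
      calc (X z x ⊔ X z y) * H∗ * (X x w ⊔ X y w) * X w v
          = (X z x ⊔ X z y) * H∗ * ((X x w ⊔ X y w) * X w v) := by rw [mul_assoc]
        _ ≤ (X z x ⊔ X z y) * H∗ * (X x v ⊔ X y v) := mul_le_mul' le_rfl (hright w v)
    · -- long * long
      refine le_sup_of_le_right ?_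
      calc (X z x ⊔ X z y) * H∗ * (X x w ⊔ X y w) * ((X w x ⊔ X w y) * H∗ * (X x v ⊔ X y v))
          = (X z x ⊔ X z y) * (H∗ * ((X x w ⊔ X y w) * (X w x ⊔ X w y)) * H∗) * (X x v ⊔ X y v) := by
            simp only [mul_assoc]
        _ ≤ (X z x ⊔ X z y) * (H∗ * H * H∗) * (X x v ⊔ X y v) :=
            mul_le_mul' (mul_le_mul' le_rfl (mul_le_mul' (mul_le_mul' le_rfl (hmid w)) le_rfl)) le_rfl
        _ ≤ (X z x ⊔ X z y) * H∗ * (X x v ⊔ X y v) := by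
            refine mul_le_mul' (mul_le_mul' le_rfl ?_) le_rfl
            calc H∗ * H * H∗ ≤ H∗ * H∗ := mul_le_mul' kstar_mul_le_kstar le_rfl
              _ = H∗ := kstar_mul_kstar H
  refine ⟨fun z => le_sup_of_le_left (Xid z), hcomp, ⟨?_, ?_⟩, fun z w => le_sup_left, ?_⟩
  · -- 1 ≤ X' x y
    refine le_sup_of_le_right ?_
    calc (1 : Language σ) = 1 * 1 * 1 := by simp
      _ ≤ (X x x ⊔ X x y) * H∗ * (X x y ⊔ X y y) :=
          mul_le_mul' (mul_le_mul' (le_sup_of_le_left (Xid x)) one_le_kstar)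
            (le_sup_of_le_right (Xid y))
  · -- 1 ≤ X' y x
    refine le_sup_of_le_right ?_
    calc (1 : Language σ) = 1 * 1 * 1 := by simp
      _ ≤ (X y x ⊔ X y y) * H∗ * (X x x ⊔ X y x) :=
          mul_le_mul' (mul_le_mul' (le_sup_of_le_right (Xid y)) one_le_kstar)
            (le_sup_of_le_left (Xid x))
  · -- minimality
    intro Y Yid Ycomp YX Yxy Yyx z w
    have hYzx : X z x ⊔ X z y ≤ Y z x := by
      refine sup_le (YX z x) ?_
      calc X z y ≤ Y z y * Y y x := by
            calc X z y = X z y * 1 := (mul_one _).symm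
              _ ≤ Y z y * Y y x := mul_le_mul' (YX z y) Yyx
        _ ≤ Y z x := Ycomp z y x
    have hYxw : X x w ⊔ X y w ≤ Y x w := by
      refine sup_le (YX x w) ?_
      calc X y w = 1 * X y w := (one_mul _).symm
        _ ≤ Y x y * Y y w := mul_le_mul' Yxy (YX y w)
        _ ≤ Y x w := Ycomp x y w
    have hYH : H ≤ Y x x := by
      refine sup_le (sup_le (sup_le (YX x x) ?_) ?_) ?_
      · calc X x y = X x y * 1 := (mul_one _).symm
          _ ≤ Y x y * Y y x := mul_le_mul' (YX x y) Yyx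
          _ ≤ Y x x := Ycomp x y x
      · calc X y x = 1 * X y x := (one_mul _).symm
          _ ≤ Y x y * Y y x := mul_le_mul' Yxy (YX y x)
          _ ≤ Y x x := Ycomp x y x
      · calc X y y = 1 * X y y * 1 := by simp
          _ ≤ Y x y * Y y y * Y y x := mul_le_mul' (mul_le_mul' Yxy (YX y y)) Yyx
          _ ≤ Y x y * Y y x := mul_le_mul' (Ycomp x y y) le_rfl
          _ ≤ Y x x := Ycomp x y x
    have hYHs : H∗ ≤ Y x x :=
      kstar_le_of_mul_le_left (Yid x) ((mul_le_mul' le_rfl hYH).trans (Ycomp x x x))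
    show X z w ⊔ (X z x ⊔ X z y) * H∗ * (X x w ⊔ X y w) ≤ Y z w
    refine sup_le (YX z w) ?_
    calc (X z x ⊔ X z y) * H∗ * (X x w ⊔ X y w)
        ≤ Y z x * Y x x * Y x w := mul_le_mul' (mul_le_mul' hYzx hYHs) hYxw
      _ ≤ Y z x * Y x w := mul_le_mul' (Ycomp z x x) le_rfl
      _ ≤ Y z w := Ycomp z x w
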